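/- The map (u,v) ↦ ((uv-4)/(u-v), (u²-2uv+4)/(2(u-v))) is a bijection from the set {(u,v) ∈ (2,∞)² : u² - 2uv + 4 > 0} onto (2,∞) × (0,∞). -/

import Mathlib

/-- The map `(u,v) ↦ ((uv-4)/(u-v), (u²-2uv+4)/(2(u-v)))` is a bijection from
`{(u,v) ∈ (2,∞)² : u² - 2uv + 4 > 0}` onto `(2,∞) × (0,∞)`. -/
theorem stmt_0 :
    Set.BijOn
      (fun p : ℝ × ℝ =>
        ((p.1 * p.2 - 4) / (p.1 - p.2), (p.1 ^ 2 - 2 * p.1 * p.2 + 4) / (2 * (p.1 - p.2))))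
      {p : ℝ × ℝ | 2 < p.1 ∧ 2 < p.2 ∧ p.1 ^ 2 - 2 * p.1 * p.2 + 4 > 0}
      (Set.Ioi (2 : ℝ) ×ˢ Set.Ioi (0 : ℝ)) := by
  refine ⟨?_, ?_, ?_⟩
  · rintro ⟨u, v⟩ ⟨hu, hv, h⟩
    have huv : v < u := by nlinarith
    have hd : (0:ℝ) < u - v := by linarith
    simp only [Set.mem_prod, Set.mem_Ioi]
    constructor
    · rw [lt_div_iff₀ hd]; nlinarith
    · apply div_pos h; linarith
  · rintro ⟨u, v⟩ ⟨hu, hv, h⟩ ⟨u', v'⟩ ⟨hu', hv', h'⟩ heq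
    have huv : v < u := by nlinarith
    have huv' : v' < u' := by nlinarith
    have hd : (0:ℝ) < u - v := by linarith
    have hd' : (0:ℝ) < u' - v' := by linarith
    simp only [Prod.mk.injEq] at heq
    obtain ⟨h1, h2⟩ := heq
    have e1 : (u * v - 4) / (u - v) + (u ^ 2 - 2 * u * v + 4) / (u - v) = u := by
      rw [← add_div, div_eq_iff hd.ne']; ring
    have e1' : (u' * v' - 4) / (u' - v') + (u' ^ 2 - 2 * u' * v' + 4) / (u' - v') = u' := by
      rw [← add_div, div_eq_iff hd'.ne']; ring
    have h2' : (u ^ 2 - 2 * u * v + 4) / (u - v) = (u' ^ 2 - 2 * u' * v' + 4) / (u' - v') := by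
      rw [div_eq_div_iff hd.ne' hd'.ne']
      have := h2
      rw [div_eq_div_iff (by positivity : (2:ℝ)*(u-v) ≠ 0) (by positivity : (2:ℝ)*(u'-v') ≠ 0)] at this
      nlinarith [this]
    have hueq : u = u' := by rw [← e1, ← e1', h1, h2']
    subst hueq
    have hveq : v = v' := by
      rw [div_eq_div_iff hd.ne' hd'.ne'] at h1
      have h0 : (u ^ 2 - 4) * (v - v') = 0 := by linear_combination h1
      rcases mul_eq_zero.1 h0 with h | h
      · nlinarith
      · linarith
    simp [hveq]
  · rintro ⟨x, y⟩ hxy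
    simp only [Set.mem_prod, Set.mem_Ioi] at hxy
    obtain ⟨hx, hy⟩ := hxy
    have hxy0 : (0:ℝ) < x + y := by linarith
    set u : ℝ := x + 2 * y with hu_def
    set v : ℝ := (x ^ 2 + 2 * x * y + 4) / (2 * (x + y)) with hv_def
    have hu : 2 < u := by simp only [hu_def]; linarith
    have hv : 2 < v := by
      rw [hv_def, lt_div_iff₀ (by positivity)]
      nlinarith [mul_pos (by linarith : (0:ℝ) < x - 2) (by linarith : (0:ℝ) < x - 2 + 2 * y)]
    have hdiff : u - v = ((x + 2 * y) ^ 2 - 4) / (2 * (x + y)) := by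
      rw [hu_def, hv_def, eq_div_iff (by positivity : (2:ℝ)*(x+y) ≠ 0)]
      field_simp
      ring
    have hdpos : (0:ℝ) < u - v := by
      rw [hdiff]
      apply div_pos
      · nlinarith
      · positivity
    have hkey : u ^ 2 - 2 * u * v + 4 = y * ((x + 2 * y) ^ 2 - 4) / (x + y) := by
      rw [hu_def, hv_def]
      field_simp
      ring
    have hpos : u ^ 2 - 2 * u * v + 4 > 0 := by
      rw [hkey]
      apply div_pos _ hxy0
      apply mul_pos hy
      nlinarith
    refine ⟨(u, v), ⟨hu, hv, hpos⟩, ?_⟩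
    simp only [Prod.mk.injEq]
    constructor
    · rw [div_eq_iff hdpos.ne', hdiff, hv_def]
      field_simp
      ring
    · rw [div_eq_iff (by positivity : (2:ℝ)*(u-v) ≠ 0), hkey, hdiff]
      field_simp
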